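/- Let A be an N×N complex Hermitian matrix and let B be the (N−1)×(N−1) principal submatrix of A obtained by deleting the k-th row and k-th column, for some fixed index k. Let a_1 ≥ a_2 ≥ … ≥ a_N be the eigenvalues of A and b_1 ≥ … ≥ b_{N−1} the eigenvalues of B, each listed in decreasing order with multiplicity. Then the eigenvalues interlace: a_{j+1} ≤ b_j ≤ a_j for every j = 1, …, N−1. -/

import Mathlib

open Matrix Polynomial

namespace CauchyInterlaceAux

open Module Submodule

section Charpoly

variable {m : Type*} [Fintype m] [DecidableEq m]

theorem charpoly_unitary_conj (U : Matrix.unitaryGroup m ℂ) (D : Matrix m m ℂ) :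
    ((U : Matrix m m ℂ) * D * (star U : Matrix m m ℂ)).charpoly = D.charpoly := by
  have hUst : (U : Matrix m m ℂ) * (star U : Matrix m m ℂ) = 1 := by
    simpa using (unitary.mul_star_self U)
  have hstU : (star U : Matrix m m ℂ) * (U : Matrix m m ℂ) = 1 := by
    simpa using (unitary.star_mul_self U)
  unfold Matrix.charpoly
  have hc : charmatrix ((U : Matrix m m ℂ) * D * (star U : Matrix m m ℂ))
      = ((U : Matrix m m ℂ).map C) * charmatrix D * ((star U : Matrix m m ℂ).map C) := by
    unfold charmatrix
    rw [Matrix.mul_sub, Matrix.sub_mul]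
    congr 1
    · have hcomm : ∀ (M : Matrix m m ℂ[X]),
          M * (scalar m) X = (scalar m) X * M := by
        intro M
        ext i j
        simp [scalar_apply, mul_diagonal, diagonal_mul, mul_comm]
      rw [hcomm, mul_assoc, ← Matrix.map_mul, hUst]
      simp
    · simp only [RingHom.mapMatrix_apply]
      rw [← Matrix.map_mul, ← Matrix.map_mul]
  rw [hc, det_mul, det_mul, mul_comm, ← mul_assoc, ← det_mul, ← Matrix.map_mul, hstU]
  simp

theorem charpoly_diagonal (d : m → ℂ) :
    (Matrix.diagonal d).charpoly = ∏ i, (X - C (d i)) := by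
  unfold Matrix.charpoly charmatrix
  simp only [RingHom.mapMatrix_apply]
  rw [Matrix.diagonal_map (by simp), scalar_apply, Matrix.diagonal_sub, Matrix.det_diagonal]

theorem roots_charpoly_hermitian {M : Matrix m m ℂ} (hM : M.IsHermitian) :
    M.charpoly.roots = Multiset.map (fun i => (hM.eigenvalues i : ℂ)) Finset.univ.val := by
  conv_lhs => rw [hM.spectral_theorem]
  rw [Unitary.conjStarAlgAut_apply, charpoly_unitary_conj, charpoly_diagonal, Finset.prod_eq_multiset_prod]
  simpa [Multiset.map_map, Function.comp] using
    Polynomial.roots_multiset_prod_X_sub_C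
      (Multiset.map (fun i => (hM.eigenvalues i : ℂ)) Finset.univ.val)

end Charpoly

section QuadraticForm

variable {m : Type*} [Fintype m] [DecidableEq m]

local notation "⟪" x ", " y "⟫" => @inner ℂ _ _ x y

theorem inner_mul_inner_self (E : Type*) [NormedAddCommGroup E] [InnerProductSpace ℂ E]
    (b x : E) : ⟪x, b⟫ * ⟪b, x⟫ = ((‖⟪b, x⟫‖ ^ 2 : ℝ) : ℂ) := by
  rw [← inner_conj_symm x b, RCLike.conj_mul]
  norm_cast

theorem qf_eq {M : Matrix m m ℂ} (hM : M.IsHermitian) (x : EuclideanSpace ℂ m) :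
    (dotProduct (star (WithLp.equiv 2 (m → ℂ) x)) (M *ᵥ (WithLp.equiv 2 (m → ℂ) x))).re
      = ∑ i, hM.eigenvalues i * ‖⟪hM.eigenvectorBasis i, x⟫‖ ^ 2 := by
  classical
  set b := hM.eigenvectorBasis
  set T := Matrix.toEuclideanLin M with hT
  have hsymm : T.IsSymmetric := (Matrix.isHermitian_iff_isSymmetric).1 hM
  have hTb : ∀ i, T (b i) = (hM.eigenvalues i : ℂ) • b i := by
    intro i
    apply (WithLp.equiv 2 (m → ℂ)).injective
    have := hM.mulVec_eigenvectorBasis i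
    simpa [Matrix.toEuclideanLin_apply, hT] using this
  have key : ⟪x, T x⟫ = ((∑ i, hM.eigenvalues i * ‖⟪b i, x⟫‖ ^ 2 : ℝ) : ℂ) := by
    rw [← b.sum_inner_mul_inner x (T x)]
    push_cast
    refine Finset.sum_congr rfl fun i _ => ?_
    have h1 : ⟪b i, T x⟫ = (hM.eigenvalues i : ℂ) * ⟪b i, x⟫ := by
      rw [← hsymm (b i) x, hTb i, inner_smul_left]
      simp
    have h2 := inner_mul_inner_self _ (b i) x
    push_cast at h2
    rw [h1]
    linear_combination (hM.eigenvalues i : ℂ) * h2 + ⟪b i, T x⟫ * (h1 - h1)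
  have hq : (dotProduct (star (WithLp.equiv 2 (m → ℂ) x)) (M *ᵥ (WithLp.equiv 2 (m → ℂ) x)))
      = ⟪x, T x⟫ := by
    rw [EuclideanSpace.inner_eq_star_dotProduct, dotProduct_comm]
    congr 1
  rw [hq, key, Complex.ofReal_re]

omit [DecidableEq m] in
theorem norm_sq_eq {E : Type*} [NormedAddCommGroup E] [InnerProductSpace ℂ E]
    [FiniteDimensional ℂ E] (b : OrthonormalBasis m ℂ E) (x : E) :
    ‖x‖ ^ 2 = ∑ i, ‖⟪b i, x⟫‖ ^ 2 := by
  have h := b.sum_inner_mul_inner x x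
  have hx : ⟪x, x⟫ = ((‖x‖ ^ 2 : ℝ) : ℂ) := by
    rw [inner_self_eq_norm_sq_to_K]; norm_cast
  rw [hx, Finset.sum_congr rfl (fun i _ => inner_mul_inner_self E (b i) x)] at h
  exact_mod_cast h.symm

omit [DecidableEq m] in
theorem repr_zero_of_mem_span {E : Type*} [NormedAddCommGroup E] [InnerProductSpace ℂ E]
    [FiniteDimensional ℂ E] (b : OrthonormalBasis m ℂ E) (S : Finset m) {x : E}
    (hx : x ∈ Submodule.span ℂ (⇑b '' ↑S)) {i : m} (hi : i ∉ S) : ⟪b i, x⟫ = 0 := by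
  have hmem : x ∈ Submodule.span ℂ (⇑b.toBasis '' ↑S) := by rwa [b.coe_toBasis]
  have hsupp := (Basis.mem_span_image (b := b.toBasis)).1 hmem
  have hrepr : b.toBasis.repr x i = 0 := by
    by_contra h
    exact hi (hsupp (Finsupp.mem_support_iff.2 h))
  rw [← b.repr_apply_apply, ← b.coe_toBasis_repr_apply]
  exact hrepr

theorem qf_le {M : Matrix m m ℂ} (hM : M.IsHermitian) (S : Finset m) (c : ℝ)
    (hc : ∀ i ∈ S, hM.eigenvalues i ≤ c) {x : EuclideanSpace ℂ m}
    (hx : x ∈ Submodule.span ℂ (⇑hM.eigenvectorBasis '' ↑S)) :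
    (dotProduct (star (WithLp.equiv 2 (m → ℂ) x)) (M *ᵥ (WithLp.equiv 2 (m → ℂ) x))).re
      ≤ c * ‖x‖ ^ 2 := by
  rw [qf_eq hM x, norm_sq_eq hM.eigenvectorBasis x, Finset.mul_sum]
  refine Finset.sum_le_sum fun i _ => ?_
  by_cases hi : i ∈ S
  · exact mul_le_mul_of_nonneg_right (hc i hi) (by positivity)
  · rw [repr_zero_of_mem_span _ S hx hi]
    simp

theorem qf_ge {M : Matrix m m ℂ} (hM : M.IsHermitian) (S : Finset m) (c : ℝ)
    (hc : ∀ i ∈ S, c ≤ hM.eigenvalues i) {x : EuclideanSpace ℂ m}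
    (hx : x ∈ Submodule.span ℂ (⇑hM.eigenvectorBasis '' ↑S)) :
    c * ‖x‖ ^ 2 ≤
      (dotProduct (star (WithLp.equiv 2 (m → ℂ) x))
        (M *ᵥ (WithLp.equiv 2 (m → ℂ) x))).re := by
  rw [qf_eq hM x, norm_sq_eq hM.eigenvectorBasis x, Finset.mul_sum]
  refine Finset.sum_le_sum fun i _ => ?_
  by_cases hi : i ∈ S
  · exact mul_le_mul_of_nonneg_right (hc i hi) (by positivity)
  · rw [repr_zero_of_mem_span _ S hx hi]
    simp

end QuadraticForm

section Emb

variable {n : ℕ}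

noncomputable def emb (k : Fin (n + 1)) :
    EuclideanSpace ℂ (Fin n) →ₗ[ℂ] EuclideanSpace ℂ (Fin (n + 1)) where
  toFun y := (WithLp.equiv 2 _).symm (Fin.insertNth k 0 ((WithLp.equiv 2 _) y))
  map_add' y z := by
    apply (WithLp.equiv 2 (Fin (n + 1) → ℂ)).injective
    funext i
    refine Fin.succAboveCases k ?_ (fun j => ?_) i <;>
      simp [Fin.insertNth_apply_same, Fin.insertNth_apply_succAbove]
  map_smul' c y := by
    apply (WithLp.equiv 2 (Fin (n + 1) → ℂ)).injective
    funext i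
    refine Fin.succAboveCases k ?_ (fun j => ?_) i <;>
      simp [Fin.insertNth_apply_same, Fin.insertNth_apply_succAbove]

theorem emb_apply_same (k : Fin (n + 1)) (y : EuclideanSpace ℂ (Fin n)) :
    (WithLp.equiv 2 _) (emb k y) k = 0 := by
  simp [emb, Fin.insertNth_apply_same]

theorem emb_apply_succAbove (k : Fin (n + 1)) (y : EuclideanSpace ℂ (Fin n)) (j : Fin n) :
    (WithLp.equiv 2 _) (emb k y) (k.succAbove j) = (WithLp.equiv 2 _) y j := by
  simp [emb, Fin.insertNth_apply_succAbove]

theorem emb_injective (k : Fin (n + 1)) : Function.Injective (emb k) := by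
  intro y z h
  apply (WithLp.equiv 2 (Fin n → ℂ)).injective
  funext j
  have := congrArg (fun w : EuclideanSpace ℂ (Fin (n + 1)) =>
    (WithLp.equiv 2 (Fin (n + 1) → ℂ)) w (k.succAbove j)) h
  simpa only [emb_apply_succAbove] using this

theorem emb_dotProduct (k : Fin (n + 1)) (A : Matrix (Fin (n + 1)) (Fin (n + 1)) ℂ)
    (y : EuclideanSpace ℂ (Fin n)) :
    dotProduct (star ((WithLp.equiv 2 _) (emb k y))) (A *ᵥ ((WithLp.equiv 2 _) (emb k y)))
      = dotProduct (star ((WithLp.equiv 2 _) y))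
          ((A.submatrix k.succAbove k.succAbove) *ᵥ ((WithLp.equiv 2 _) y)) := by
  set x := (WithLp.equiv 2 _) (emb k y) with hx
  set y' := (WithLp.equiv 2 _) y
  have hk : x k = 0 := emb_apply_same k y
  have hsa : ∀ j, x (k.succAbove j) = y' j := emb_apply_succAbove k y
  simp only [dotProduct, Matrix.mulVec, dotProduct, Pi.star_apply]
  rw [Fin.sum_univ_succAbove _ k]
  simp only [hk, star_zero, zero_mul, zero_add, hsa]
  refine Finset.sum_congr rfl fun i _ => ?_
  congr 1
  rw [Fin.sum_univ_succAbove _ k]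
  simp [hk, hsa, Matrix.submatrix]

theorem emb_norm (k : Fin (n + 1)) (y : EuclideanSpace ℂ (Fin n)) : ‖emb k y‖ = ‖y‖ := by
  have h0 : (emb k y) k = (0 : ℂ) := emb_apply_same k y
  have hs : ∀ j, (emb k y) (k.succAbove j) = y j := emb_apply_succAbove k y
  rw [EuclideanSpace.norm_eq, EuclideanSpace.norm_eq]
  congr 1
  rw [Fin.sum_univ_succAbove (fun i => ‖(emb k y) i‖ ^ 2) k, h0]
  simp [hs]

end Emb

theorem count_card_eq {m' : Type*} [Fintype m'] {f g : m' → ℝ}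
    (h : Multiset.map f Finset.univ.val = Multiset.map g Finset.univ.val)
    (p : ℝ → Prop) [DecidablePred p] :
    (Finset.univ.filter fun i => p (f i)).card = (Finset.univ.filter fun i => p (g i)).card := by
  classical
  have h2 := congrArg (Multiset.countP p) h
  rw [Multiset.countP_map, Multiset.countP_map] at h2
  exact h2

theorem image_coe_eq_range {ι : Type*} {E : Type*} (v : ι → E) (S : Finset ι) :
    v '' ↑S = Set.range (v ∘ (Subtype.val : {x // x ∈ S} → ι)) := by
  ext e
  simp [Set.mem_image, Set.mem_range, Subtype.exists, eq_comm]

theorem exists_common {n : ℕ} (k : Fin (n + 1)) {A : Matrix (Fin (n + 1)) (Fin (n + 1)) ℂ}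
    (hA : A.IsHermitian) (hB : (A.submatrix k.succAbove k.succAbove).IsHermitian)
    (SA : Finset (Fin (n + 1))) (SB : Finset (Fin n))
    (hcard : n + 2 ≤ SA.card + SB.card) :
    ∃ y : EuclideanSpace ℂ (Fin n), y ≠ 0 ∧
      y ∈ span ℂ (⇑hB.eigenvectorBasis '' ↑SB) ∧
      emb k y ∈ span ℂ (⇑hA.eigenvectorBasis '' ↑SA) := by
  classical
  set bA := hA.eigenvectorBasis with hbA
  set bB := hB.eigenvectorBasis with hbB
  have hliA : LinearIndependent ℂ ⇑bA := by
    rw [← bA.coe_toBasis]; exact bA.toBasis.linearIndependent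
  have hliB : LinearIndependent ℂ ⇑bB := by
    rw [← bB.coe_toBasis]; exact bB.toBasis.linearIndependent
  set V : Submodule ℂ (EuclideanSpace ℂ (Fin (n + 1))) :=
    Submodule.map (emb k) (span ℂ (⇑bB '' ↑SB)) with hV
  set W := span ℂ (⇑bA '' ↑SA) with hW
  have hrankW : finrank ℂ W = SA.card := by
    rw [hW, image_coe_eq_range ⇑bA SA, finrank_span_eq_card (hliA.comp _ Subtype.val_injective),
      Fintype.card_coe]
  have hrankV : finrank ℂ V = SB.card := by
    have hker : LinearMap.ker (emb k) = ⊥ := LinearMap.ker_eq_bot.2 (emb_injective k)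
    have hliV : LinearIndependent ℂ ((⇑(emb k) ∘ ⇑bB) ∘ (Subtype.val : SB → Fin n)) :=
      (hliB.map' (emb k) hker).comp _ Subtype.val_injective
    rw [hV, Submodule.map_span, ← Set.image_comp, image_coe_eq_range (⇑(emb k) ∘ ⇑bB) SB,
      finrank_span_eq_card hliV, Fintype.card_coe]
  have hsup : finrank ℂ ↥(V ⊔ W) ≤ n + 1 := by
    refine le_trans (Submodule.finrank_le _) ?_
    simp [finrank_euclideanSpace]
  have hkey := Submodule.finrank_sup_add_finrank_inf_eq V W
  have hpos : 0 < finrank ℂ ↥(V ⊓ W) := by omega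
  have hne : V ⊓ W ≠ ⊥ := by
    intro hbot
    rw [hbot, finrank_bot] at hpos
    exact lt_irrefl 0 hpos
  obtain ⟨x, hxmem, hx0⟩ := Submodule.exists_mem_ne_zero_of_ne_bot hne
  obtain ⟨y, hy, rfl⟩ := Submodule.mem_map.1 hxmem.1
  refine ⟨y, fun h => hx0 ?_, hy, hxmem.2⟩
  rw [h, map_zero]

end CauchyInterlaceAux

open CauchyInterlaceAux in
/-- **Cauchy interlace theorem.** If `A` is an `(n+1) × (n+1)` complex Hermitian matrix and
`B` is the principal submatrix obtained by deleting the `k`-th row and column, then the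
eigenvalues of `A` (listed in decreasing order with multiplicity) interlace those of `B`. -/
theorem stmt0 (n : ℕ) (A : Matrix (Fin (n + 1)) (Fin (n + 1)) ℂ)
    (hA : A.IsHermitian) (k : Fin (n + 1))
    (a : Fin (n + 1) → ℝ) (b : Fin n → ℝ)
    (ha_sorted : Antitone a) (hb_sorted : Antitone b)
    (ha_eig : (A.charpoly).roots = Multiset.map (fun i => (a i : ℂ)) Finset.univ.val)
    (hb_eig : ((A.submatrix k.succAbove k.succAbove).charpoly).roots
      = Multiset.map (fun i => (b i : ℂ)) Finset.univ.val) :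
    ∀ j : Fin n, a j.succ ≤ b j ∧ b j ≤ a j.castSucc := by
  classical
  have hB : (A.submatrix k.succAbove k.succAbove).IsHermitian := hA.submatrix k.succAbove
  set μ := hA.eigenvalues with hμ
  set ν := hB.eigenvalues with hν
  -- multiset identities
  have hAmul : Multiset.map a Finset.univ.val = Multiset.map μ Finset.univ.val := by
    apply Multiset.map_injective Complex.ofReal_injective
    simp only [Multiset.map_map, Function.comp]
    exact ha_eig.symm.trans (roots_charpoly_hermitian hA)
  have hBmul : Multiset.map b Finset.univ.val = Multiset.map ν Finset.univ.val := by
    apply Multiset.map_injective Complex.ofReal_injective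
    simp only [Multiset.map_map, Function.comp]
    exact hb_eig.symm.trans (roots_charpoly_hermitian hB)
  -- counting lemmas
  have countA_ge : ∀ j : Fin (n + 1),
      (j : ℕ) + 1 ≤ (Finset.univ.filter fun i => a j ≤ μ i).card := by
    intro j
    rw [← count_card_eq hAmul (fun t => a j ≤ t)]
    calc (j : ℕ) + 1 = (Finset.Iic j).card := (Fin.card_Iic j).symm
      _ ≤ _ := Finset.card_le_card fun i hi => by
        simp only [Finset.mem_filter, Finset.mem_univ, true_and]
        exact ha_sorted (Finset.mem_Iic.1 hi)
  have countA_le : ∀ j : Fin (n + 1),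
      (n + 1) - (j : ℕ) ≤ (Finset.univ.filter fun i => μ i ≤ a j).card := by
    intro j
    rw [← count_card_eq hAmul (fun t => t ≤ a j)]
    calc (n + 1) - (j : ℕ) = (Finset.Ici j).card := (Fin.card_Ici j).symm
      _ ≤ _ := Finset.card_le_card fun i hi => by
        simp only [Finset.mem_filter, Finset.mem_univ, true_and]
        exact ha_sorted (Finset.mem_Ici.1 hi)
  have countB_ge : ∀ j : Fin n,
      (j : ℕ) + 1 ≤ (Finset.univ.filter fun i => b j ≤ ν i).card := by
    intro j
    rw [← count_card_eq hBmul (fun t => b j ≤ t)]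
    calc (j : ℕ) + 1 = (Finset.Iic j).card := (Fin.card_Iic j).symm
      _ ≤ _ := Finset.card_le_card fun i hi => by
        simp only [Finset.mem_filter, Finset.mem_univ, true_and]
        exact hb_sorted (Finset.mem_Iic.1 hi)
  have countB_le : ∀ j : Fin n,
      n - (j : ℕ) ≤ (Finset.univ.filter fun i => ν i ≤ b j).card := by
    intro j
    rw [← count_card_eq hBmul (fun t => t ≤ b j)]
    calc n - (j : ℕ) = (Finset.Ici j).card := (Fin.card_Ici j).symm
      _ ≤ _ := Finset.card_le_card fun i hi => by
        simp only [Finset.mem_filter, Finset.mem_univ, true_and]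
        exact hb_sorted (Finset.mem_Ici.1 hi)
  intro j
  have hjn : (j : ℕ) < n := j.isLt
  constructor
  · -- a j.succ ≤ b j
    set SA := Finset.univ.filter fun i => a j.succ ≤ μ i with hSA
    set SB := Finset.univ.filter fun i => ν i ≤ b j with hSB
    have hcard : n + 2 ≤ SA.card + SB.card := by
      have h1 := countA_ge j.succ
      have h2 := countB_le j
      rw [Fin.val_succ] at h1
      rw [hSA, hSB]
      omega
    obtain ⟨y, hy0, hySB, hxSA⟩ := exists_common k hA hB SA SB hcard
    have hnorm : (0 : ℝ) < ‖y‖ ^ 2 := pow_pos (norm_pos_iff.2 hy0) 2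
    have h1 := qf_ge hA SA (a j.succ)
      (fun i hi => (Finset.mem_filter.1 hi).2) hxSA
    have h2 := qf_le hB SB (b j)
      (fun i hi => (Finset.mem_filter.1 hi).2) hySB
    have h3 := congrArg Complex.re (emb_dotProduct k A y)
    have h4 : ‖emb k y‖ = ‖y‖ := emb_norm k y
    rw [h4, h3] at h1
    have := h1.trans h2
    exact le_of_mul_le_mul_right this hnorm
  · -- b j ≤ a j.castSucc
    set SA := Finset.univ.filter fun i => μ i ≤ a j.castSucc with hSA
    set SB := Finset.univ.filter fun i => b j ≤ ν i with hSB
    have hcard : n + 2 ≤ SA.card + SB.card := by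
      have h1 := countA_le j.castSucc
      have h2 := countB_ge j
      rw [Fin.coe_castSucc] at h1
      rw [hSA, hSB]
      omega
    obtain ⟨y, hy0, hySB, hxSA⟩ := exists_common k hA hB SA SB hcard
    have hnorm : (0 : ℝ) < ‖y‖ ^ 2 := pow_pos (norm_pos_iff.2 hy0) 2
    have h1 := qf_le hA SA (a j.castSucc)
      (fun i hi => (Finset.mem_filter.1 hi).2) hxSA
    have h2 := qf_ge hB SB (b j)
      (fun i hi => (Finset.mem_filter.1 hi).2) hySB
    have h3 := congrArg Complex.re (emb_dotProduct k A y)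
    have h4 : ‖emb k y‖ = ‖y‖ := emb_norm k y
    rw [h4, h3] at h1
    have := h2.trans h1
    exact le_of_mul_le_mul_right this hnorm
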